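/- Let μ = ∫ μ_ω dν(ω) be a mixture over an ergodic shift-invariant ν, with equivariant kernel, such that for all bounded measurable f, g depending on finitely many coordinates and all sufficiently large k: ∫ f·(g∘S^k) dμ_ω = (∫ f dμ_ω)·(∫ g∘S^k dμ_ω). Then (1/n) Σ_{k<n} ∫ f·(g∘S^k) dμ → (∫ f dμ)(∫ g dμ) for all such f, g. -/

import Mathlib

open MeasureTheory Filter

open MeasureTheory Filter Function
open scoped ENNReal RealInnerProductSpace

set_option maxHeartbeats 1000000 in
set_option synthInstance.maxHeartbeats 200000 in
lemma weak_mean_ergodic {α : Type*} [MeasurableSpace α] {ν : Measure α} [IsProbabilityMeasure ν]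
    {T : α → α} (herg : Ergodic T ν)
    (F G : α → ℝ) (hF : Measurable F) (hG : Measurable G)
    (CF : ℝ) (hCF : ∀ x, |F x| ≤ CF) (CG : ℝ) (hCG : ∀ x, |G x| ≤ CG) :
    Tendsto (fun n : ℕ => (1 / (n:ℝ)) * ∑ k ∈ Finset.range n, ∫ x, F x * G (T^[k] x) ∂ν)
      atTop (nhds ((∫ x, F x ∂ν) * ∫ x, G x ∂ν)) := by
  have hFm : MemLp F 2 ν :=
    MemLp.of_bound hF.aestronglyMeasurable CF (ae_of_all _ fun x => by
      simpa [Real.norm_eq_abs] using hCF x)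
  have hGm : MemLp G 2 ν :=
    MemLp.of_bound hG.aestronglyMeasurable CG (ae_of_all _ fun x => by
      simpa [Real.norm_eq_abs] using hCG x)
  set U : Lp ℝ 2 ν →L[ℝ] Lp ℝ 2 ν :=
    (Lp.compMeasurePreservingₗᵢ ℝ T herg.toMeasurePreserving).toContinuousLinearMap with hUdef
  have hU : ‖U‖ ≤ 1 := LinearIsometry.norm_toContinuousLinearMap_le _
  set Fl : Lp ℝ 2 ν := hFm.toLp F with hFL
  set Gl : Lp ℝ 2 ν := hGm.toLp G with hGL
  have hUcoe : ∀ h : Lp ℝ 2 ν, (U h : α → ℝ) =ᵐ[ν] h ∘ T := fun h =>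
    Lp.coeFn_compMeasurePreserving h herg.toMeasurePreserving
  -- iterates
  have hiter : ∀ k : ℕ, (U^[k] Gl : α → ℝ) =ᵐ[ν] G ∘ T^[k] := by
    intro k
    induction k with
    | zero => simpa using hGm.coeFn_toLp
    | succ k ih =>
        have h1 : (U^[k+1] Gl : α → ℝ) =ᵐ[ν] (U^[k] Gl : Lp ℝ 2 ν) ∘ T := by
          rw [Function.iterate_succ_apply']
          exact hUcoe _
        have h2 : ((U^[k] Gl : Lp ℝ 2 ν) : α → ℝ) ∘ T =ᵐ[ν] (G ∘ T^[k]) ∘ T :=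
          herg.toMeasurePreserving.quasiMeasurePreserving.ae_eq_comp ih
        have h3 : (G ∘ T^[k]) ∘ T = G ∘ T^[k+1] := by
          rw [Function.iterate_succ]; rfl
        exact h1.trans (h2.trans (by rw [h3]))
  -- inner products of iterates
  have hinner : ∀ k : ℕ, ⟪Fl, U^[k] Gl⟫ = ∫ x, F x * G (T^[k] x) ∂ν := by
    intro k
    rw [L2.inner_def]
    refine integral_congr_ae ?_
    filter_upwards [hFm.coeFn_toLp, hiter k] with x h1 h2
    simp [hFL, h1, h2, RCLike.inner_apply, mul_comm]
  -- von Neumann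
  have hconv := U.tendsto_birkhoffAverage_orthogonalProjection hU Gl
  set PG : Lp ℝ 2 ν := (Submodule.orthogonalProjectionOnto (U.eqLocus (1 : Lp ℝ 2 ν →L[ℝ] Lp ℝ 2 ν)) Gl : Lp ℝ 2 ν) with hPGdef
  have hPmem : U PG = PG := (Submodule.orthogonalProjectionOnto (U.eqLocus (1 : Lp ℝ 2 ν →L[ℝ] Lp ℝ 2 ν)) Gl).2
  have hPae : (PG : α → ℝ) ∘ T =ᵐ[ν] (PG : α → ℝ) := by
    have h := hUcoe PG
    rw [hPmem] at h
    exact h.symm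
  obtain ⟨c, hc⟩ := herg.ae_eq_const_of_ae_eq_comp₀
    (Lp.aestronglyMeasurable PG).aemeasurable.nullMeasurable hPae
  have hone : MemLp (fun _ : α => (1:ℝ)) 2 ν := memLp_const 1
  set oneL : Lp ℝ 2 ν := hone.toLp _ with honedef
  have honeM : oneL ∈ U.eqLocus (1 : Lp ℝ 2 ν →L[ℝ] Lp ℝ 2 ν) := by
    show U oneL = oneL
    apply Lp.ext
    have h1 := hUcoe oneL
    have h2 := hone.coeFn_toLp
    have h3 : ((oneL : α → ℝ) ∘ T) =ᵐ[ν] (oneL : α → ℝ) := by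
      have h4 := herg.toMeasurePreserving.quasiMeasurePreserving.ae_eq_comp h2
      exact h4.trans h2.symm
    exact h1.trans h3
  have horth := Submodule.sub_starProjection_mem_orthogonal
    (K := U.eqLocus (1 : Lp ℝ 2 ν →L[ℝ] Lp ℝ 2 ν)) Gl
  have hz : ⟪oneL, Gl - PG⟫ = 0 := (Submodule.mem_orthogonal _ _).1 horth oneL honeM
  have hGone : ⟪oneL, Gl⟫ = ∫ x, G x ∂ν := by
    rw [L2.inner_def]
    refine integral_congr_ae ?_
    filter_upwards [hone.coeFn_toLp, hGm.coeFn_toLp] with x h1 h2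
    simp [hGL, honedef, h1, h2, RCLike.inner_apply]
  have hPone : ⟪oneL, PG⟫ = c := by
    rw [L2.inner_def]
    have : ∫ x, (inner ℝ (oneL x) (PG x) : ℝ) ∂ν = ∫ (_ : α), c ∂ν := by
      refine integral_congr_ae ?_
      filter_upwards [hone.coeFn_toLp, hc] with x h1 h2
      simp [honedef, h1, h2, RCLike.inner_apply, Function.const]
    rw [this]
    simp
  have hcG : c = ∫ x, G x ∂ν := by
    have := sub_eq_zero.1 (by rw [inner_sub_right] at hz; linarith [hz] : ⟪oneL, Gl⟫ - ⟪oneL, PG⟫ = 0)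
    rw [← hGone, this, hPone]
  have hFP : ⟪Fl, PG⟫ = (∫ x, F x ∂ν) * ∫ x, G x ∂ν := by
    rw [L2.inner_def]
    have h5 : ∫ x, (inner ℝ (Fl x) (PG x) : ℝ) ∂ν = ∫ x, F x * c ∂ν := by
      refine integral_congr_ae ?_
      filter_upwards [hFm.coeFn_toLp, hc] with x h1 h2
      simp [hFL, h1, h2, RCLike.inner_apply, Function.const, mul_comm]
    rw [h5, integral_mul_const, hcG]
  have hlim : Tendsto (fun n => ⟪Fl, birkhoffAverage ℝ (⇑U) _root_.id n Gl⟫) atTop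
      (nhds ⟪Fl, PG⟫) := Filter.Tendsto.inner tendsto_const_nhds hconv
  rw [← hFP]
  refine hlim.congr fun n => ?_
  rw [birkhoffAverage, birkhoffSum, real_inner_smul_right, inner_sum]
  simp only [_root_.id, one_div]
  congr 1
  exact Finset.sum_congr rfl fun k _ => hinner k


/-- Cesàro-mean decorrelation for the mixture measure: if `ν` is ergodic and
shift-invariant, the kernel `(μ_ω)` is equivariant, and for bounded measurable `f, g`
depending on finitely many coordinates one has fiberwise factorization
`∫ f·(g∘S^k) dμ_ω = (∫ f dμ_ω)(∫ g∘S^k dμ_ω)` for all sufficiently large `k`, then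
`(1/n) Σ_{k<n} ∫ f·(g∘S^k) dμ → (∫ f dμ)(∫ g dμ)` for all such `f, g`. -/
theorem mixture_cesaro_decorrelation
    (d : ℕ)
    (ν : Measure (ℤ → (Fin d → ℝ))) [IsProbabilityMeasure ν]
    (T : (ℤ → (Fin d → ℝ)) → (ℤ → (Fin d → ℝ))) (hT : ∀ x n, T x n = x (n + 1))
    (S : (ℤ → (Fin d → Set.Ioo (0:ℝ) 1)) → (ℤ → (Fin d → Set.Ioo (0:ℝ) 1)))
    (hS : ∀ y n, S y n = y (n + 1)) (hSmeas : Measurable S)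
    (herg : Ergodic T ν)
    (κ : (ℤ → (Fin d → ℝ)) → Measure (ℤ → (Fin d → Set.Ioo (0:ℝ) 1)))
    (hprob : ∀ ω, IsProbabilityMeasure (κ ω))
    (hmeas : ∀ s : Set (ℤ → (Fin d → Set.Ioo (0:ℝ) 1)), MeasurableSet s →
      Measurable (fun ω => κ ω s))
    (hequiv : ∀ ω (h : (ℤ → (Fin d → Set.Ioo (0:ℝ) 1)) → ℝ), Measurable h →
      (∃ C : ℝ, ∀ z, |h z| ≤ C) →
      ∫ z, h z ∂(κ ω) = ∫ z, h (S z) ∂(κ (T ω))) :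
    ∀ (f g : (ℤ → (Fin d → Set.Ioo (0:ℝ) 1)) → ℝ),
      Measurable f → Measurable g →
      (∃ C : ℝ, ∀ z, |f z| ≤ C) → (∃ C : ℝ, ∀ z, |g z| ≤ C) →
      (∃ N : ℕ, ∀ x y, (∀ i : ℤ, |i| ≤ (N : ℤ) → x i = y i) → f x = f y) →
      (∃ N : ℕ, ∀ x y, (∀ i : ℤ, |i| ≤ (N : ℤ) → x i = y i) → g x = g y) →
      (∃ K : ℕ, ∀ k ≥ K, ∀ ω,
        ∫ z, f z * g (S^[k] z) ∂(κ ω) =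
          (∫ z, f z ∂(κ ω)) * (∫ z, g (S^[k] z) ∂(κ ω))) →
      Tendsto (fun n : ℕ =>
          (1 / (n : ℝ)) * ∑ k ∈ Finset.range n, ∫ z, f z * g (S^[k] z) ∂(ν.bind κ))
        atTop (nhds ((∫ z, f z ∂(ν.bind κ)) * (∫ z, g z ∂(ν.bind κ)))) := by
  intro f g hfm hgm hfb hgb _ _ hfac
  obtain ⟨Cf, hCf⟩ := hfb
  obtain ⟨Cg, hCg⟩ := hgb
  obtain ⟨K, hK⟩ := hfac
  haveI : Nonempty (ℤ → (Fin d → Set.Ioo (0:ℝ) 1)) :=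
    ⟨fun _ _ => ⟨1/2, ⟨by norm_num, by norm_num⟩⟩⟩
  have hCf0 : 0 ≤ Cf := le_trans (abs_nonneg _) (hCf (Classical.arbitrary _))
  set η : ProbabilityTheory.Kernel (ℤ → (Fin d → ℝ)) (ℤ → (Fin d → Set.Ioo (0:ℝ) 1)) :=
    ⟨κ, Measure.measurable_of_measurable_coe κ hmeas⟩ with hη
  haveI : ProbabilityTheory.IsMarkovKernel η := ⟨hprob⟩
  have hmapsnd : ν.bind κ = (ν.compProd η).map Prod.snd := by
    ext s hs
    rw [Measure.bind_apply hs (Measure.measurable_of_measurable_coe κ hmeas).aemeasurable,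
      Measure.map_apply measurable_snd hs,
      Measure.compProd_apply (measurable_snd hs)]
    exact lintegral_congr fun ω => rfl
  have hbind : ∀ (h : (ℤ → (Fin d → Set.Ioo (0:ℝ) 1)) → ℝ) (C : ℝ),
      Measurable h → (∀ z, |h z| ≤ C) →
      ∫ z, h z ∂(ν.bind κ) = ∫ ω, ∫ z, h z ∂(κ ω) ∂ν := by
    intro h C hh hhb
    rw [hmapsnd, integral_map measurable_snd.aemeasurable hh.aestronglyMeasurable]
    have hint : Integrable (fun p : (ℤ → (Fin d → ℝ)) × (ℤ → (Fin d → Set.Ioo (0:ℝ) 1)) =>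
        h p.2) (ν.compProd η) :=
      ⟨(hh.comp measurable_snd).aestronglyMeasurable,
        HasFiniteIntegral.of_bounded (C := C) (ae_of_all _ fun p => by
          simpa [Real.norm_eq_abs] using hhb p.2)⟩
    rw [Measure.integral_compProd hint]
    rfl
  have hmeasint : ∀ (h : (ℤ → (Fin d → Set.Ioo (0:ℝ) 1)) → ℝ), Measurable h →
      Measurable fun ω => ∫ z, h z ∂(κ ω) := by
    intro h hh
    exact ((hh.comp measurable_snd).stronglyMeasurable.integral_kernel_prod_right'
      (κ := η)).measurable
  have hbdint : ∀ (h : (ℤ → (Fin d → Set.Ioo (0:ℝ) 1)) → ℝ) (C : ℝ), (∀ z, |h z| ≤ C) →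
      ∀ ω, |∫ z, h z ∂(κ ω)| ≤ C := by
    intro h C hC ω
    haveI := hprob ω
    have h2 := norm_integral_le_of_norm_le_const (μ := κ ω) (f := h) (C := C)
      (ae_of_all _ fun z => by simpa [Real.norm_eq_abs] using hC z)
    simpa [Real.norm_eq_abs, measure_univ] using h2
  set F : (ℤ → (Fin d → ℝ)) → ℝ := fun ω => ∫ z, f z ∂(κ ω) with hF
  set G : (ℤ → (Fin d → ℝ)) → ℝ := fun ω => ∫ z, g z ∂(κ ω) with hG
  have hFmeas : Measurable F := hmeasint f hfm
  have hGmeas : Measurable G := hmeasint g hgm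
  have hFb : ∀ ω, |F ω| ≤ Cf := hbdint f Cf hCf
  have hGb : ∀ ω, |G ω| ≤ Cg := hbdint g Cg hCg
  have hiter : ∀ (k : ℕ) (h : (ℤ → (Fin d → Set.Ioo (0:ℝ) 1)) → ℝ), Measurable h →
      ∀ C : ℝ, (∀ z, |h z| ≤ C) → ∀ ω,
      ∫ z, h z ∂(κ ω) = ∫ z, h (S^[k] z) ∂(κ (T^[k] ω)) := by
    intro k
    induction k with
    | zero => intro h _ C _ ω; simp
    | succ k ih =>
        intro h hh C hC ω
        rw [ih h hh C hC ω]
        have h2 := hequiv (T^[k] ω) (fun z => h (S^[k] z))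
          (hh.comp (hSmeas.iterate k)) ⟨C, fun z => hC _⟩
        rw [h2]
        have e1 : T (T^[k] ω) = T^[k+1] ω := (Function.iterate_succ_apply' T k ω).symm
        rw [e1]
        exact integral_congr_ae (ae_of_all _ fun z => by
          simp only [Function.iterate_succ_apply])
  have hGk : ∀ (k : ℕ) ω, (∫ z, g (S^[k] z) ∂(κ (T^[k] ω))) = G ω :=
    fun k ω => (hiter k g hgm Cg hCg ω).symm
  have hABk : ∀ k, K ≤ k → (∫ z, f z * g (S^[k] z) ∂(ν.bind κ))
      = ∫ ω, G ω * F (T^[k] ω) ∂ν := by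
    intro k hk
    have hgk : Measurable fun z => g (S^[k] z) := hgm.comp (hSmeas.iterate k)
    have hhk : Measurable fun z => f z * g (S^[k] z) := hfm.mul hgk
    have hhb : ∀ z, |f z * g (S^[k] z)| ≤ Cf * Cg := fun z => by
      rw [abs_mul]; exact mul_le_mul (hCf z) (hCg _) (abs_nonneg _) hCf0
    rw [hbind _ (Cf * Cg) hhk hhb]
    have h1 : (fun ω => ∫ z, f z * g (S^[k] z) ∂(κ ω))
        = fun ω => F ω * ∫ z, g (S^[k] z) ∂(κ ω) := funext fun ω => hK k hk ω
    rw [h1]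
    have hGkm : Measurable fun ω => ∫ z, g (S^[k] z) ∂(κ ω) := hmeasint _ hgk
    have hmp : MeasurePreserving (T^[k]) ν ν := herg.toMeasurePreserving.iterate k
    have h3 : ∫ ω, F ω * ∫ z, g (S^[k] z) ∂(κ ω) ∂ν
        = ∫ ω, F (T^[k] ω) * ∫ z, g (S^[k] z) ∂(κ (T^[k] ω)) ∂ν := by
      conv_lhs => rw [← hmp.map_eq]
      rw [integral_map hmp.measurable.aemeasurable (f := fun ω => F ω * ∫ z, g (S^[k] z) ∂(κ ω))
        ((hFmeas.mul hGkm : Measurable fun ω => F ω * ∫ z, g (S^[k] z) ∂(κ ω)).aestronglyMeasurable)]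
    rw [h3]
    refine integral_congr_ae (ae_of_all _ fun ω => ?_)
    show F (T^[k] ω) * (∫ z, g (S^[k] z) ∂(κ (T^[k] ω))) = G ω * F (T^[k] ω)
    rw [hGk k ω]
    ring
  have hBtend := weak_mean_ergodic herg G F hGmeas hFmeas Cg hGb Cf hFb
  have hfund : (∫ z, f z ∂(ν.bind κ)) = ∫ ω, F ω ∂ν := hbind f Cf hfm hCf
  have hgund : (∫ z, g z ∂(ν.bind κ)) = ∫ ω, G ω ∂ν := hbind g Cg hgm hCg
  set A : ℕ → ℝ := fun k => ∫ z, f z * g (S^[k] z) ∂(ν.bind κ) with hA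
  set B : ℕ → ℝ := fun k => ∫ ω, G ω * F (T^[k] ω) ∂ν with hB
  have hdiff : Tendsto (fun n : ℕ => (1/(n:ℝ)) * ∑ k ∈ Finset.range n, A k
      - (1/(n:ℝ)) * ∑ k ∈ Finset.range n, B k) atTop (nhds 0) := by
    have hev : ∀ᶠ n : ℕ in atTop, (1/(n:ℝ)) * ∑ k ∈ Finset.range K, (A k - B k)
        = (1/(n:ℝ)) * ∑ k ∈ Finset.range n, A k
          - (1/(n:ℝ)) * ∑ k ∈ Finset.range n, B k := by
      filter_upwards [eventually_ge_atTop K] with n hn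
      rw [← mul_sub, ← Finset.sum_sub_distrib]
      congr 1
      refine Finset.sum_subset (Finset.range_subset_range.2 hn) fun k _ hk => ?_
      rw [sub_eq_zero]
      exact hABk k (le_of_not_gt (fun hlt => hk (Finset.mem_range.2 hlt)))
    have h0 : Tendsto (fun n : ℕ => (1/(n:ℝ)) * ∑ k ∈ Finset.range K, (A k - B k))
        atTop (nhds 0) := by
      simpa using tendsto_one_div_atTop_nhds_zero_nat.mul_const
        (∑ k ∈ Finset.range K, (A k - B k))
    exact h0.congr' hev
  have hAtend : Tendsto (fun n : ℕ => (1/(n:ℝ)) * ∑ k ∈ Finset.range n, A k) atTop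
      (nhds ((∫ ω, G ω ∂ν) * ∫ ω, F ω ∂ν)) := by
    have h4 := hdiff.add hBtend
    simpa using h4
  have hfinal : (∫ z, f z ∂(ν.bind κ)) * (∫ z, g z ∂(ν.bind κ))
      = (∫ ω, G ω ∂ν) * ∫ ω, F ω ∂ν := by
    rw [hfund, hgund, mul_comm]
  rw [hfinal]
  exact hAtend
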